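/- Let n, k be integers with k ≥ 1, and let γ be a real number with 0 < γ and k < n/2 − γ; set a₀ = (n−k−2)/2. Then for every real a ≥ a₀, the function b ↦ Θʳ(γ,a,b) is strictly increasing on the interval [0, ∞). -/

import Mathlib

open Complex Filter Finset Topology

/-- The Fourier symbol `Θ(a,b)` at a real argument `b`:
`Θʳ(γ,a,b) = 4^γ · ‖Γ_ℂ((1+γ+a)/2 + (b/2)i)‖² / ‖Γ_ℂ((1−γ+a)/2 + (b/2)i)‖²`. -/
noncomputable def ThetaR (γ a b : ℝ) : ℝ :=
  (4 : ℝ) ^ γ * ‖Complex.Gamma (((1 + γ + a) / 2 : ℝ) + (b / 2 : ℝ) * Complex.I)‖ ^ 2 /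
    ‖Complex.Gamma (((1 - γ + a) / 2 : ℝ) + (b / 2 : ℝ) * Complex.I)‖ ^ 2

/-- norm squared of `x + y i + j`. -/
lemma norm_sq_shift (x y : ℝ) (j : ℕ) :
    ‖((x : ℂ) + (y : ℂ) * Complex.I + (j : ℕ))‖ ^ 2 = (x + j) ^ 2 + y ^ 2 := by
  rw [← Complex.normSq_eq_norm_sq]
  simp [Complex.normSq_apply]
  ring

/-- Key identity for the norm of `GammaSeq`. -/
lemma gammaSeq_norm_sq (x y : ℝ) (hx : 0 < x) (n : ℕ) (hn : 1 ≤ n) :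
    ‖Complex.GammaSeq ((x : ℂ) + (y : ℂ) * Complex.I) n‖ ^ 2 *
      ∏ j ∈ Finset.range (n + 1), ((x + j) ^ 2 + y ^ 2)
    = ((n : ℝ) ^ x * (n.factorial : ℝ)) ^ 2 := by
  have hprod : ∏ j ∈ Finset.range (n + 1), ((x + j) ^ 2 + y ^ 2)
      = ∏ j ∈ Finset.range (n + 1), ‖((x : ℂ) + (y : ℂ) * Complex.I + (j : ℕ))‖ ^ 2 := by
    refine Finset.prod_congr rfl fun j _ => (norm_sq_shift x y j).symm
  rw [hprod, Complex.GammaSeq]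
  rw [norm_div, norm_mul, div_pow, mul_pow]
  rw [Complex.norm_natCast_cpow_of_pos hn]
  have hre : ((x : ℂ) + (y : ℂ) * Complex.I).re = x := by simp
  rw [hre]
  have hP : ‖∏ j ∈ Finset.range (n + 1), ((x : ℂ) + (y : ℂ) * Complex.I + (j : ℕ))‖ ^ 2
      = ∏ j ∈ Finset.range (n + 1), ‖((x : ℂ) + (y : ℂ) * Complex.I + (j : ℕ))‖ ^ 2 := by
    rw [norm_prod, ← Finset.prod_pow]
  have hPpos : 0 < ∏ j ∈ Finset.range (n + 1), ‖((x : ℂ) + (y : ℂ) * Complex.I + (j : ℕ))‖ ^ 2 := by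
    refine Finset.prod_pos fun j _ => ?_
    rw [norm_sq_shift]
    positivity
  rw [hP, div_mul_cancel₀ _ (ne_of_gt hPpos)]
  simp
  ring

/-- The finite product inequality. -/
lemma prod_star (p q s t : ℝ) (hq : 0 < q) (hpq : q < p) (hs : 0 ≤ s) (hst : s ≤ t) (n : ℕ) :
    (q ^ 2 + t) * (p ^ 2 + s) *
        ((∏ j ∈ Finset.range (n + 1), ((q + j) ^ 2 + s)) *
          ∏ j ∈ Finset.range (n + 1), ((p + j) ^ 2 + t))
      ≤ (q ^ 2 + s) * (p ^ 2 + t) *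
        ((∏ j ∈ Finset.range (n + 1), ((q + j) ^ 2 + t)) *
          ∏ j ∈ Finset.range (n + 1), ((p + j) ^ 2 + s)) := by
  rw [← Finset.prod_mul_distrib, ← Finset.prod_mul_distrib,
    Finset.prod_range_succ', Finset.prod_range_succ']
  simp only [Nat.cast_zero, add_zero]
  have ht : 0 ≤ t := hs.trans hst
  have htq : 0 ≤ q ^ 2 + t := by positivity
  have hsp : 0 ≤ p ^ 2 + s := by positivity
  have hsq : 0 ≤ q ^ 2 + s := by positivity
  have htp : 0 ≤ p ^ 2 + t := by positivity
  have h1 : (q ^ 2 + t) * (p ^ 2 + s) * ((q ^ 2 + s) * (p ^ 2 + t)) =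
      (q ^ 2 + s) * (p ^ 2 + t) * ((q ^ 2 + t) * (p ^ 2 + s)) := by ring
  calc (q ^ 2 + t) * (p ^ 2 + s) *
        ((∏ j ∈ Finset.range n, ((q + (j + 1 : ℕ)) ^ 2 + s) * ((p + (j + 1 : ℕ)) ^ 2 + t)) *
          ((q ^ 2 + s) * (p ^ 2 + t)))
      ≤ (q ^ 2 + t) * (p ^ 2 + s) *
        ((∏ j ∈ Finset.range n, ((q + (j + 1 : ℕ)) ^ 2 + t) * ((p + (j + 1 : ℕ)) ^ 2 + s)) *
          ((q ^ 2 + s) * (p ^ 2 + t))) := by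
        refine mul_le_mul_of_nonneg_left (mul_le_mul_of_nonneg_right ?_
          (mul_nonneg hsq htp)) (mul_nonneg htq hsp)
        refine Finset.prod_le_prod (fun j _ => mul_nonneg (by positivity) (by positivity))
          fun j _ => ?_
        have hA : (q + (j + 1 : ℕ)) ^ 2 ≤ (p + (j + 1 : ℕ)) ^ 2 := by
          have : (0:ℝ) ≤ q + (j + 1 : ℕ) := by positivity
          nlinarith
        nlinarith
    _ = (q ^ 2 + s) * (p ^ 2 + t) *
        ((∏ j ∈ Finset.range n, ((q + (j + 1 : ℕ)) ^ 2 + t) * ((p + (j + 1 : ℕ)) ^ 2 + s)) *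
          ((q ^ 2 + t) * (p ^ 2 + s))) := by ring

lemma gamma_cross (p q y₁ y₂ : ℝ) (hq : 0 < q) (hpq : q < p) (hy : 0 ≤ y₁) (h12 : y₁ < y₂) :
    ‖Complex.Gamma ((q : ℂ) + (y₂ : ℂ) * Complex.I)‖ ^ 2 *
        ‖Complex.Gamma ((p : ℂ) + (y₁ : ℂ) * Complex.I)‖ ^ 2 *
        ((q ^ 2 + y₂ ^ 2) * (p ^ 2 + y₁ ^ 2))
      ≤ (q ^ 2 + y₁ ^ 2) * (p ^ 2 + y₂ ^ 2) *
        (‖Complex.Gamma ((q : ℂ) + (y₁ : ℂ) * Complex.I)‖ ^ 2 *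
          ‖Complex.Gamma ((p : ℂ) + (y₂ : ℂ) * Complex.I)‖ ^ 2) := by
  have hp : 0 < p := hq.trans hpq
  have T : ∀ x y : ℝ, Tendsto (fun m => ‖Complex.GammaSeq ((x : ℂ) + (y : ℂ) * Complex.I) m‖ ^ 2)
      atTop (𝓝 (‖Complex.Gamma ((x : ℂ) + (y : ℂ) * Complex.I)‖ ^ 2)) :=
    fun x y => (Complex.GammaSeq_tendsto_Gamma _).norm.pow 2
  refine le_of_tendsto_of_tendsto (((T q y₂).mul (T p y₁)).mul_const _)
    (tendsto_const_nhds.mul ((T q y₁).mul (T p y₂))) ?_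
  filter_upwards [eventually_ge_atTop 1] with m hm
  set s := y₁ ^ 2 with hsdef
  set t := y₂ ^ 2 with htdef
  have hs : 0 ≤ s := sq_nonneg _
  have hst : s ≤ t := by nlinarith
  set d1 := ∏ j ∈ Finset.range (m + 1), ((q + j) ^ 2 + s) with hd1
  set d2 := ∏ j ∈ Finset.range (m + 1), ((q + j) ^ 2 + t) with hd2
  set e1 := ∏ j ∈ Finset.range (m + 1), ((p + j) ^ 2 + s) with he1
  set e2 := ∏ j ∈ Finset.range (m + 1), ((p + j) ^ 2 + t) with he2
  have ht : 0 ≤ t := hs.trans hst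
  have hd1p : 0 < d1 := Finset.prod_pos fun j _ => by positivity
  have hd2p : 0 < d2 := Finset.prod_pos fun j _ => by positivity
  have he1p : 0 < e1 := Finset.prod_pos fun j _ => by positivity
  have he2p : 0 < e2 := Finset.prod_pos fun j _ => by positivity
  have h1 := gammaSeq_norm_sq q y₁ hq m hm
  have h2 := gammaSeq_norm_sq q y₂ hq m hm
  have h3 := gammaSeq_norm_sq p y₁ hp m hm
  have h4 := gammaSeq_norm_sq p y₂ hp m hm
  rw [← hd1] at h1; rw [← hd2] at h2; rw [← he1] at h3; rw [← he2] at h4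
  set a1 := ‖Complex.GammaSeq ((q : ℂ) + (y₁ : ℂ) * Complex.I) m‖ ^ 2
  set a2 := ‖Complex.GammaSeq ((q : ℂ) + (y₂ : ℂ) * Complex.I) m‖ ^ 2
  set b1 := ‖Complex.GammaSeq ((p : ℂ) + (y₁ : ℂ) * Complex.I) m‖ ^ 2
  set b2 := ‖Complex.GammaSeq ((p : ℂ) + (y₂ : ℂ) * Complex.I) m‖ ^ 2
  set Kq := ((m : ℝ) ^ q * (m.factorial : ℝ)) ^ 2
  set Kp := ((m : ℝ) ^ p * (m.factorial : ℝ)) ^ 2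
  have star := prod_star p q s t hq hpq hs hst m
  rw [← hd1, ← hd2, ← he1, ← he2] at star
  have H : (a2 * b1 * ((q ^ 2 + t) * (p ^ 2 + s))) * (d1 * d2 * e1 * e2)
      ≤ ((q ^ 2 + s) * (p ^ 2 + t) * (a1 * b2)) * (d1 * d2 * e1 * e2) := by
    calc (a2 * b1 * ((q ^ 2 + t) * (p ^ 2 + s))) * (d1 * d2 * e1 * e2)
        = (a2 * d2) * (b1 * e1) * ((q ^ 2 + t) * (p ^ 2 + s) * (d1 * e2)) := by ring
      _ = Kq * Kp * ((q ^ 2 + t) * (p ^ 2 + s) * (d1 * e2)) := by rw [h2, h3]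
      _ ≤ Kq * Kp * ((q ^ 2 + s) * (p ^ 2 + t) * (d2 * e1)) := by
          refine mul_le_mul_of_nonneg_left star (by positivity)
      _ = (a1 * d1) * (b2 * e2) * ((q ^ 2 + s) * (p ^ 2 + t) * (d2 * e1)) := by rw [h1, h4]
      _ = ((q ^ 2 + s) * (p ^ 2 + t) * (a1 * b2)) * (d1 * d2 * e1 * e2) := by ring
  exact le_of_mul_le_mul_right H (by positivity)

theorem stmt3 (n k : ℤ) (hk : 1 ≤ k) (γ : ℝ) (hγ : 0 < γ)
    (hkn : (k : ℝ) < (n : ℝ) / 2 - γ) :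
    ∀ a : ℝ, ((n : ℝ) - (k : ℝ) - 2) / 2 ≤ a →
      StrictMonoOn (fun b : ℝ => ThetaR γ a b) (Set.Ici 0) := by
  intro a ha
  intro b₁ hb₁ b₂ hb₂ h12
  have hk' : (1 : ℝ) ≤ (k : ℝ) := by exact_mod_cast hk
  set q : ℝ := (1 - γ + a) / 2 with hqdef
  set p : ℝ := (1 + γ + a) / 2 with hpdef
  have hq : 0 < q := by simp only [hqdef]; linarith
  have hp : 0 < p := by simp only [hpdef]; linarith
  have hpq : q < p := by simp only [hqdef, hpdef]; linarith
  have hy1 : (0 : ℝ) ≤ b₁ / 2 := by have := hb₁; simp only [Set.mem_Ici] at this; linarith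
  have hy12 : b₁ / 2 < b₂ / 2 := by linarith
  have key := gamma_cross p q (b₁ / 2) (b₂ / 2) hq hpq hy1 hy12
  have hne : ∀ (x y : ℝ), 0 < x → Complex.Gamma ((x : ℂ) + (y : ℂ) * Complex.I) ≠ 0 := by
    intro x y hx
    apply Complex.Gamma_ne_zero_of_re_pos
    simp [hx]
  have hq1 : (0 : ℝ) < ‖Complex.Gamma ((q : ℂ) + ((b₁ / 2 : ℝ) : ℂ) * Complex.I)‖ ^ 2 :=
    pow_pos (norm_pos_iff.mpr (hne q _ hq)) 2
  have hq2 : (0 : ℝ) < ‖Complex.Gamma ((q : ℂ) + ((b₂ / 2 : ℝ) : ℂ) * Complex.I)‖ ^ 2 :=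
    pow_pos (norm_pos_iff.mpr (hne q _ hq)) 2
  have hp1 : (0 : ℝ) < ‖Complex.Gamma ((p : ℂ) + ((b₁ / 2 : ℝ) : ℂ) * Complex.I)‖ ^ 2 :=
    pow_pos (norm_pos_iff.mpr (hne p _ hp)) 2
  have hp2 : (0 : ℝ) < ‖Complex.Gamma ((p : ℂ) + ((b₂ / 2 : ℝ) : ℂ) * Complex.I)‖ ^ 2 :=
    pow_pos (norm_pos_iff.mpr (hne p _ hp)) 2
  have hC : (q ^ 2 + (b₁ / 2) ^ 2) * (p ^ 2 + (b₂ / 2) ^ 2)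
      < (q ^ 2 + (b₂ / 2) ^ 2) * (p ^ 2 + (b₁ / 2) ^ 2) := by
    have h1 : (b₁ / 2) ^ 2 < (b₂ / 2) ^ 2 := by nlinarith
    have h2 : q ^ 2 < p ^ 2 := by nlinarith
    nlinarith [mul_pos (sub_pos.mpr h2) (sub_pos.mpr h1)]
  have hC2 : 0 < (q ^ 2 + (b₁ / 2) ^ 2) * (p ^ 2 + (b₂ / 2) ^ 2) := by positivity
  show ThetaR γ a b₁ < ThetaR γ a b₂
  rw [ThetaR, ThetaR, div_lt_div_iff₀ (by rw [← hqdef]; exact hq1) (by rw [← hqdef]; exact hq2)]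
  rw [← hqdef, ← hpdef]
  have h4 : (0 : ℝ) < (4 : ℝ) ^ γ := Real.rpow_pos_of_pos (by norm_num) γ
  set A1 := ‖Complex.Gamma ((q : ℂ) + ((b₁ / 2 : ℝ) : ℂ) * Complex.I)‖ ^ 2 with hA1
  set A2 := ‖Complex.Gamma ((q : ℂ) + ((b₂ / 2 : ℝ) : ℂ) * Complex.I)‖ ^ 2 with hA2
  set B1 := ‖Complex.Gamma ((p : ℂ) + ((b₁ / 2 : ℝ) : ℂ) * Complex.I)‖ ^ 2 with hB1
  set B2 := ‖Complex.Gamma ((p : ℂ) + ((b₂ / 2 : ℝ) : ℂ) * Complex.I)‖ ^ 2 with hB2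
  clear_value A1 A2 B1 B2
  set C1 := (q ^ 2 + (b₂ / 2) ^ 2) * (p ^ 2 + (b₁ / 2) ^ 2) with hC1
  set C2 := (q ^ 2 + (b₁ / 2) ^ 2) * (p ^ 2 + (b₂ / 2) ^ 2) with hC2'
  clear_value C1 C2
  -- key : A2 * B1 * C1 ≤ C2 * (A1 * B2), hC : C2 < C1
  have hXY : A2 * B1 < A1 * B2 := by
    have s1 : (A2 * B1) * C2 < (A2 * B1) * C1 :=
      mul_lt_mul_of_pos_left hC (mul_pos hq2 hp1)
    have s2 : (A2 * B1) * C1 ≤ (A1 * B2) * C2 := by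
      calc (A2 * B1) * C1 = A2 * B1 * C1 := by ring
        _ ≤ C2 * (A1 * B2) := key
        _ = (A1 * B2) * C2 := by ring
    exact lt_of_mul_lt_mul_right (s1.trans_le s2) (le_of_lt hC2)
  calc (4:ℝ) ^ γ * B1 * A2 = (4:ℝ) ^ γ * (A2 * B1) := by ring
    _ < (4:ℝ) ^ γ * (A1 * B2) := mul_lt_mul_of_pos_left hXY h4
    _ = (4:ℝ) ^ γ * B2 * A1 := by ring
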